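/- If m is even, then W_f(0) = −2^m. -/

import Mathlib

open Finset

/-- Absolute trace-style sum `Tr_n : F → F` for `n = 2m`. -/
def trN (m : ℕ) {F : Type*} [Field F] (x : F) : F :=
  ∑ i ∈ Finset.range (2 * m), x ^ (2 ^ i)

/-- Trace-style sum `Tr_m : F → F` (meant for elements of the subfield `K`). -/
def trM (m : ℕ) {F : Type*} [Field F] (x : F) : F :=
  ∑ i ∈ Finset.range m, x ^ (2 ^ i)

/-- `ε(0) = 1`, `ε(t) = -1` for `t ≠ 0`. -/
def eps {F : Type*} [Field F] [DecidableEq F] (t : F) : ℤ :=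
  if t = 0 then 1 else -1

/-- Kloosterman sum `k_m(μ) = ∑_{x ∈ K, x ≠ 0} χ_m(x + μ x⁻¹)`. -/
def klooM (m : ℕ) {F : Type*} [Field F] [Fintype F] [DecidableEq F] (μ : F) : ℤ :=
  ∑ x ∈ Finset.univ.filter (fun x : F => x ^ (2 ^ m) = x ∧ x ≠ 0),
    eps (trM m (x + μ * x⁻¹))

/-- Kloosterman sum over the big field: `k_n(μ) = ∑_{x ∈ F, x ≠ 0} χ_n(x + μ x⁻¹)`. -/
def klooN (m : ℕ) {F : Type*} [Field F] [Fintype F] [DecidableEq F] (μ : F) : ℤ :=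
  ∑ x ∈ Finset.univ.filter (fun x : F => x ≠ 0), eps (trN m (x + μ * x⁻¹))

/-- Walsh transform of `h : F → F` (with values in `{0,1}`) at `a`. -/
def walsh (m : ℕ) {F : Type*} [Field F] [Fintype F] [DecidableEq F] (h : F → F) (a : F) : ℤ :=
  ∑ x : F, eps (h x + trN m (a * x))

/-- The Boolean function `f_{λ,μ}(x) = Tr_n(λ x^{2^m+1}) + Tr_n(x)·Tr_n(μ x^{2^m-1})`. -/
def fFun (m : ℕ) {F : Type*} [Field F] (l μ : F) : F → F :=
  fun x => trN m (l * x ^ (2 ^ m + 1)) + trN m x * trN m (μ * x ^ (2 ^ m - 1))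

/-- The Boolean function
`g_{λ,μ}(x) = (1 + Tr_n(x))·Tr_n(λ x^{2^m+1}) + Tr_n(x)·Tr_n(μ x^{2^m-1})`. -/
def gFun (m : ℕ) {F : Type*} [Field F] (l μ : F) : F → F :=
  fun x => (1 + trN m x) * trN m (l * x ^ (2 ^ m + 1)) +
    trN m x * trN m (μ * x ^ (2 ^ m - 1))



lemma charTwo (m : ℕ) (hm : 0 < m) (F : Type*) [Field F] [Fintype F]
    (hcard : Fintype.card F = 2 ^ (2 * m)) : CharP F 2 := by
  have h1 := CharP.char_is_prime F (ringChar F)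
  obtain ⟨n, hp, hc⟩ := FiniteField.card F (ringChar F)
  rw [hcard] at hc
  have : ringChar F = 2 := by
    have hdvd : ringChar F ∣ 2 ^ (2 * m) := hc ▸ dvd_pow_self _ (by positivity)
    have := (Nat.Prime.dvd_of_dvd_pow hp hdvd)
    exact (Nat.prime_dvd_prime_iff_eq hp Nat.prime_two).mp this
  exact this ▸ ringChar.charP F
section
variable {F : Type*} [Field F] [CharP F 2]

lemma two_eq_zero' : (2 : F) = 0 := by
  have := CharP.cast_eq_zero F 2; exact_mod_cast this

lemma add_self' (x : F) : x + x = 0 := CharTwo.add_self_eq_zero x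

lemma pow2pow_add (x y : F) (k : ℕ) : (x + y) ^ (2 ^ k) = x ^ (2 ^ k) + y ^ (2 ^ k) :=
  add_pow_char_pow ..

lemma trM_add (m : ℕ) (x y : F) : trM m (x + y) = trM m x + trM m y := by
  unfold trM
  rw [← Finset.sum_add_distrib]
  exact Finset.sum_congr rfl fun i _ => pow2pow_add x y i

omit [CharP F 2] in
lemma trM_zero (m : ℕ) : trM m (0 : F) = 0 := by
  unfold trM
  exact Finset.sum_eq_zero fun i _ => zero_pow (by positivity)

lemma trN_eq (m : ℕ) (x : F) : trN m x = trM m (x + x ^ (2 ^ m)) := by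
  rw [trM_add]
  unfold trN trM
  rw [two_mul, Finset.sum_range_add]
  congr 1
  exact Finset.sum_congr rfl fun i _ => by rw [← pow_mul, ← pow_add]

omit [CharP F 2] in
lemma trM_sq (m : ℕ) (y : F) (hy : y ^ (2 ^ m) = y) : trM m (y ^ 2) = trM m y := by
  unfold trM
  have h1 : ∀ i ∈ Finset.range m, (y ^ 2) ^ (2 ^ i) = y ^ (2 ^ (i + 1)) := by
    intro i _; rw [← pow_mul, ← pow_succ']
  rw [Finset.sum_congr rfl h1]
  have h2 := Finset.sum_range_succ' (fun i => y ^ 2 ^ i) m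
  have h3 := Finset.sum_range_succ (fun i => y ^ 2 ^ i) m
  simp only [pow_zero, pow_one, hy] at h2 h3
  have := h2.symm.trans h3
  exact add_right_cancel this

-- trM of element of K is 0 or 1
lemma trM_K_sq (m : ℕ) (y : F) (hy : y ^ (2 ^ m) = y) : (trM m y) ^ 2 = trM m y := by
  have : (trM m y) ^ 2 = trM m (y ^ 2) := by
    unfold trM
    have hf := map_sum (frobenius F 2) (fun i => y ^ 2 ^ i) (Finset.range m)
    simp only [frobenius_def] at hf
    rw [hf]
    exact Finset.sum_congr rfl fun i _ => by
      rw [← pow_mul, ← pow_mul, mul_comm]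
  rw [this, trM_sq m y hy]

lemma trM_K_cases (m : ℕ) (y : F) (hy : y ^ (2 ^ m) = y) : trM m y = 0 ∨ trM m y = 1 := by
  have h := trM_K_sq m y hy
  have : trM m y * (trM m y - 1) = 0 := by ring_nf; linear_combination h
  rcases mul_eq_zero.mp this with h' | h'
  · exact Or.inl h'
  · exact Or.inr (by linear_combination h')

end
section
variable {F : Type*} [Field F] [Fintype F] [DecidableEq F] [CharP F 2]

lemma c2_add_eq_zero_iff (a b : F) : a + b = 0 ↔ a = b := by
  rw [← CharTwo.sub_eq_add, sub_eq_zero]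

lemma card_pow_eq_le (k : ℕ) (hk : 2 ≤ k) :
    (Finset.univ.filter fun x : F => x ^ k = x).card ≤ k := by
  classical
  set p : Polynomial F := Polynomial.X ^ k - Polynomial.X with hp
  have hdeg : p.natDegree = k := by
    rw [hp, Polynomial.natDegree_sub_eq_left_of_natDegree_lt]
    · exact Polynomial.natDegree_X_pow k
    · simpa using (show 1 < k by omega)
  have hp0 : p ≠ 0 := by
    intro h
    rw [h] at hdeg
    simp at hdeg
    omega
  have := Polynomial.card_le_degree_of_subset_roots (p := p)
    (Z := Finset.univ.filter fun x : F => x ^ k = x) ?_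
  · rwa [hdeg] at this
  · intro z hz
    simp only [Finset.mem_val, Finset.mem_filter] at hz
    rw [Polynomial.mem_roots hp0]
    simp [Polynomial.IsRoot, hp, sub_eq_zero, hz.2]

lemma card_K (m : ℕ) (hm : 0 < m) (hcard : Fintype.card F = 2 ^ (2 * m)) :
    (Finset.univ.filter fun x : F => x ^ (2 ^ m) = x).card = 2 ^ m := by
  classical
  set q := 2 ^ m with hq
  have hq1 : 1 < q := by
    rw [hq]; exact Nat.one_lt_two_pow (by omega)
  have hFq : Fintype.card F = q * q := by rw [hcard, hq, ← pow_add, two_mul]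
  set φ : F →+ F := AddMonoidHom.mk' (fun x => x ^ q + x)
    (fun a b => by
      show (a + b) ^ q + (a + b) = (a ^ q + a) + (b ^ q + b)
      rw [hq, pow2pow_add]; ring) with hφ
  have hφx : ∀ x : F, φ x = x ^ q + x := fun x => rfl
  have hker : ∀ x : F, x ∈ φ.ker ↔ x ^ q = x := by
    intro x
    rw [AddMonoidHom.mem_ker, hφx, c2_add_eq_zero_iff]
  have hrange_le : φ.range ≤ φ.ker := by
    rintro y ⟨x, rfl⟩
    rw [AddMonoidHom.mem_ker, hφx, hφx]
    have hpow : (x ^ q) ^ q = x := by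
      rw [← pow_mul, hq, ← pow_add, ← two_mul, ← hcard]
      exact FiniteField.pow_card x
    rw [pow2pow_add, hpow, ← hq]
    ring_nf
    rw [two_eq_zero']
    ring
  have hkercard : Nat.card φ.ker = (Finset.univ.filter fun x : F => x ^ q = x).card := by
    rw [Nat.card_congr (Equiv.subtypeEquivRight hker), Nat.card_eq_fintype_card,
      Fintype.card_subtype]
  have hkerle : Nat.card φ.ker ≤ q := by
    rw [hkercard]; exact card_pow_eq_le q hq1
  have hrangele : Nat.card φ.range ≤ Nat.card φ.ker := AddSubgroup.card_le_of_le hrange_le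
  have hprod : q * q = Nat.card φ.range * Nat.card φ.ker := by
    rw [← hFq, ← Nat.card_eq_fintype_card,
      AddSubgroup.card_eq_card_quotient_mul_card_addSubgroup φ.ker,
      Nat.card_congr (QuotientAddGroup.quotientKerEquivRange φ).toEquiv]
  have hkq : Nat.card φ.ker = q := by
    by_contra hne
    have hlt : Nat.card φ.ker < q := lt_of_le_of_ne hkerle hne
    have : q * q < q * q := by
      calc q * q = Nat.card φ.range * Nat.card φ.ker := hprod
        _ ≤ Nat.card φ.ker * Nat.card φ.ker := by
            exact Nat.mul_le_mul_right _ hrangele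
        _ < q * q := Nat.mul_lt_mul_of_lt_of_lt hlt hlt
    omega
  rw [← hkercard, hkq]

end
section
variable {F : Type*} [Field F] [Fintype F] [DecidableEq F]

lemma unit_subtype_card (k : ℕ) (hk : 0 < k) :
    Nat.card {u : Fˣ // u ^ k = 1} = (Finset.univ.filter fun x : F => x ^ k = 1).card := by
  classical
  have e : {u : Fˣ // u ^ k = 1} ≃ {x : F // x ^ k = 1} :=
    { toFun := fun u => ⟨(u.1 : F), by
        have := congrArg Units.val u.2
        simpa [Units.val_pow_eq_pow_val] using this⟩
      invFun := fun x => ⟨Units.mk0 x.1 (by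
        intro h0
        have := x.2
        rw [h0, zero_pow (by omega)] at this
        exact zero_ne_one this), by
        ext
        simpa [Units.val_pow_eq_pow_val] using x.2⟩
      left_inv := fun u => by ext; rfl
      right_inv := fun x => rfl }
  rw [Nat.card_congr e, Nat.card_eq_fintype_card, Fintype.card_subtype]

lemma card_pow_eq_one_le (k : ℕ) (hk : 0 < k) :
    (Finset.univ.filter fun x : F => x ^ k = 1).card ≤ k := by
  classical
  set p : Polynomial F := Polynomial.X ^ k - Polynomial.C 1 with hp
  have hdeg : p.natDegree = k := Polynomial.natDegree_X_pow_sub_C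
  have hp0 : p ≠ 0 := by
    intro h
    rw [h] at hdeg
    simp at hdeg
    omega
  have := Polynomial.card_le_degree_of_subset_roots (p := p)
    (Z := Finset.univ.filter fun x : F => x ^ k = 1) ?_
  · rwa [hdeg] at this
  · intro z hz
    simp only [Finset.mem_val, Finset.mem_filter] at hz
    rw [Polynomial.mem_roots hp0]
    simp [Polynomial.IsRoot, hp, sub_eq_zero, hz.2]

lemma card_U (m : ℕ) (hm : 0 < m) [CharP F 2] (hcard : Fintype.card F = 2 ^ (2 * m)) :
    (Finset.univ.filter fun x : F => x ^ (2 ^ m + 1) = 1).card = 2 ^ m + 1 := by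
  classical
  set q := 2 ^ m with hq
  have hq1 : 1 < q := Nat.one_lt_two_pow (by omega)
  have hFq : Fintype.card F = q * q := by rw [hcard, hq, ← pow_add, two_mul]
  have hcu : Fintype.card Fˣ = q * q - 1 := by rw [Fintype.card_units, hFq]
  -- kernel card
  set ψ : Fˣ →* Fˣ := powMonoidHom (q - 1) with hψ
  have hψx : ∀ u : Fˣ, ψ u = u ^ (q - 1) := fun u => rfl
  have hinsert : (Finset.univ.filter fun x : F => x ^ q = x) =
      insert (0 : F) (Finset.univ.filter fun x : F => x ^ (q - 1) = 1) := by
    ext x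
    simp only [Finset.mem_filter, Finset.mem_univ, true_and, Finset.mem_insert]
    constructor
    · intro h
      rcases eq_or_ne x 0 with h0 | h0
      · exact Or.inl h0
      · right
        have : x ^ (q - 1) * x = 1 * x := by
          rw [one_mul, ← pow_succ, Nat.sub_add_cancel (le_of_lt hq1), h]
        exact mul_right_cancel₀ h0 this
    · rintro (rfl | h)
      · exact zero_pow (by omega)
      · have : x ^ (q - 1) * x = x := by rw [h, one_mul]
        rw [← pow_succ, Nat.sub_add_cancel (le_of_lt hq1)] at this
        exact this
  have hKm1 : (Finset.univ.filter fun x : F => x ^ (q - 1) = 1).card = q - 1 := by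
    have h0 : (0 : F) ∉ (Finset.univ.filter fun x : F => x ^ (q - 1) = 1) := by
      simp only [Finset.mem_filter, Finset.mem_univ, true_and]
      rw [zero_pow (by omega)]
      exact fun h => zero_ne_one h
    have := card_K m hm hcard
    rw [hinsert, Finset.card_insert_of_notMem h0] at this
    omega
  have hkerc : Nat.card ψ.ker = q - 1 := by
    have e : (ψ.ker : Type _) ≃ {u : Fˣ // u ^ (q - 1) = 1} :=
      Equiv.subtypeEquivRight fun u => by rw [MonoidHom.mem_ker, hψx]
    rw [Nat.card_congr e, unit_subtype_card (q - 1) (by omega), hKm1]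
  have hprod : q * q - 1 = Nat.card ψ.range * Nat.card ψ.ker := by
    rw [← hcu, ← Nat.card_eq_fintype_card,
      Subgroup.card_eq_card_quotient_mul_card_subgroup ψ.ker,
      Nat.card_congr (QuotientGroup.quotientKerEquivRange ψ).toEquiv]
  have hqq : q * q - 1 = (q + 1) * (q - 1) := by
    have h1 : 1 ≤ q := by omega
    have h2 : 1 ≤ q * q := Nat.one_le_iff_ne_zero.mpr (by positivity)
    zify [h1, h2]
    ring
  have hrangec : Nat.card ψ.range = q + 1 := by
    have := hprod
    rw [hqq, hkerc] at this
    exact Nat.eq_of_mul_eq_mul_right (by omega) this.symm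
  -- range embeds into the U filter
  have hle : Nat.card ψ.range ≤ (Finset.univ.filter fun x : F => x ^ (q + 1) = 1).card := by
    rw [← unit_subtype_card (q + 1) (by omega)]
    apply Nat.card_le_card_of_injective
      (f := fun u : ψ.range => (⟨u.1, by
        obtain ⟨v, hv⟩ := u.2
        rw [hψx] at hv
        rw [← hv, ← pow_mul]
        have : (q - 1) * (q + 1) = q * q - 1 := by rw [mul_comm, ← hqq]
        rw [this, ← hcu]
        exact pow_card_eq_one⟩ : {u : Fˣ // u ^ (q + 1) = 1}))
    intro a b hab
    have h2 := congrArg (fun z : {u : Fˣ // u ^ (q + 1) = 1} => z.1) hab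
    exact Subtype.ext h2
  rw [hrangec] at hle
  exact le_antisymm (card_pow_eq_one_le (q + 1) (by omega)) hle

end
section
variable {F : Type*} [Field F] [Fintype F] [DecidableEq F] [CharP F 2]

lemma exists_trM_one (m : ℕ) (hm : 0 < m) (hcard : Fintype.card F = 2 ^ (2 * m)) :
    ∃ y : F, y ^ (2 ^ m) = y ∧ trM m y = 1 := by
  classical
  by_contra hno
  push_neg at hno
  have hall : ∀ y : F, y ^ (2 ^ m) = y → trM m y = 0 := by
    intro y hy
    rcases trM_K_cases m y hy with h | h
    · exact h
    · exact absurd h (hno y hy)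
  set p : Polynomial F := ∑ i ∈ Finset.range m, Polynomial.X ^ (2 ^ i) with hp
  have heval : ∀ y : F, p.eval y = trM m y := by
    intro y
    rw [hp, Polynomial.eval_finset_sum]
    unfold trM
    simp
  have hp0 : p ≠ 0 := by
    intro h
    have : p.coeff 1 = 1 := by
      rw [hp, Polynomial.finset_sum_coeff]
      have : ∀ i ∈ Finset.range m, (Polynomial.X ^ (2 ^ i) : Polynomial F).coeff 1 =
          if i = 0 then 1 else 0 := by
        intro i _
        rw [Polynomial.coeff_X_pow]
        congr 1
        rcases Nat.eq_zero_or_pos i with rfl | hi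
        · simp
        · simp only [eq_iff_iff]
          constructor
          · intro h1
            have : 2 ≤ 2 ^ i := by
              calc 2 = 2 ^ 1 := by norm_num
              _ ≤ 2 ^ i := Nat.pow_le_pow_right (by norm_num) hi
            omega
          · omega
      rw [Finset.sum_congr rfl this, Finset.sum_ite_eq' (Finset.range m) 0 (fun _ => (1 : F))]
      simp [Finset.mem_range, hm]
    rw [h] at this
    simp at this
  have hdegle : p.natDegree ≤ 2 ^ (m - 1) := by
    rw [hp]
    apply Polynomial.natDegree_sum_le_of_forall_le
    intro i hi
    rw [Polynomial.natDegree_X_pow]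
    exact Nat.pow_le_pow_right (by norm_num) (by simp at hi; omega)
  have hsub := Polynomial.card_le_degree_of_subset_roots (p := p)
    (Z := Finset.univ.filter fun x : F => x ^ (2 ^ m) = x) ?_
  · rw [card_K m hm hcard] at hsub
    have : 2 ^ m ≤ 2 ^ (m - 1) := le_trans hsub hdegle
    have h2 : 2 ^ (m - 1) < 2 ^ m := Nat.pow_lt_pow_right (by norm_num) (by omega)
    omega
  · intro z hz
    simp only [Finset.mem_val, Finset.mem_filter] at hz
    rw [Polynomial.mem_roots hp0]
    rw [Polynomial.IsRoot, heval]
    exact hall z hz.2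

lemma char_sum_K (m : ℕ) (hm : 0 < m) (hcard : Fintype.card F = 2 ^ (2 * m))
    (c : F) (hc : c ≠ 0) (hcK : c ^ (2 ^ m) = c) :
    ∑ s ∈ Finset.univ.filter (fun x : F => x ^ (2 ^ m) = x), eps (trM m (c * s)) = 0 := by
  classical
  obtain ⟨y, hyK, hy1⟩ := exists_trM_one m hm hcard
  set d := y * c⁻¹ with hd
  have hcd : c * d = y := by rw [hd, mul_comm, mul_assoc, inv_mul_cancel₀ hc, mul_one]
  have hdK : d ^ (2 ^ m) = d := by rw [hd, mul_pow, hyK, inv_pow, hcK]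
  have hd0 : d ≠ 0 := by
    intro h
    rw [h, mul_zero] at hcd
    rw [← hcd, trM_zero] at hy1
    exact zero_ne_one hy1
  apply Finset.sum_involution (fun s _ => s + d)
  · intro s hs
    simp only [Finset.mem_filter, Finset.mem_univ, true_and] at hs
    have hkey : trM m (c * (s + d)) = trM m (c * s) + 1 := by
      rw [mul_add, trM_add, hcd, hy1]
    have hcs : (c * s) ^ (2 ^ m) = c * s := by rw [mul_pow, hcK, hs]
    rcases trM_K_cases m (c * s) hcs with h | h <;>
      simp [eps, h, hkey, CharTwo.add_self_eq_zero]
  · intro s _ _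
    intro h
    exact hd0 (by rwa [add_eq_left] at h)
  · intro s hs
    simp only [Finset.mem_filter, Finset.mem_univ, true_and] at hs ⊢
    rw [pow2pow_add, hs, hdK]
  · intro s _
    rw [add_assoc, CharTwo.add_self_eq_zero, add_zero]

lemma char_sum_Kstar (m : ℕ) (hm : 0 < m) (hcard : Fintype.card F = 2 ^ (2 * m))
    (c : F) (hc : c ≠ 0) (hcK : c ^ (2 ^ m) = c) :
    ∑ s ∈ Finset.univ.filter (fun x : F => x ^ (2 ^ m) = x ∧ x ≠ 0),
      eps (trM m (c * s)) = -1 := by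
  classical
  have hsplit : (Finset.univ.filter fun x : F => x ^ (2 ^ m) = x) =
      insert (0 : F) (Finset.univ.filter fun x : F => x ^ (2 ^ m) = x ∧ x ≠ 0) := by
    ext x
    simp only [Finset.mem_filter, Finset.mem_univ, true_and, Finset.mem_insert]
    constructor
    · intro h
      rcases eq_or_ne x 0 with h0 | h0
      · exact Or.inl h0
      · exact Or.inr ⟨h, h0⟩
    · rintro (rfl | h)
      · exact zero_pow (by positivity)
      · exact h.1
  have h0 : (0 : F) ∉ (Finset.univ.filter fun x : F => x ^ (2 ^ m) = x ∧ x ≠ 0) := by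
    simp
  have := char_sum_K m hm hcard c hc hcK
  rw [hsplit, Finset.sum_insert h0, mul_zero, trM_zero] at this
  rw [show eps (0 : F) = 1 from if_pos rfl] at this
  linarith

end
section
variable {F : Type*} [Field F] [Fintype F] [DecidableEq F] [CharP F 2]

omit [Fintype F] [DecidableEq F] in
lemma u_ne_cube (m : ℕ) (hm : 0 < m) (hmeven : Even m)
    (u : F) (hu : u ^ (2 ^ m + 1) = 1) (hu1 : u ≠ 1) : u + u⁻¹ ≠ 1 := by
  intro ht
  have hu0 : u ≠ 0 := by
    intro h0
    rw [h0, zero_pow (by positivity)] at hu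
    exact zero_ne_one hu
  -- u^2 = u + 1
  have hsq : u ^ 2 = u + 1 := by
    have := congrArg (· * u) ht
    simp only [add_mul, inv_mul_cancel₀ hu0, one_mul] at this
    -- this : u * u + 1 = u
    have h2 : u ^ 2 = u + 1 := by
      rw [pow_two]
      have := congrArg (· + 1) this
      simp only [add_assoc, CharTwo.add_self_eq_zero, add_zero] at this
      exact this
    exact h2
  have hcube : u ^ 3 = 1 := by
    have : u ^ 3 = u * u ^ 2 := by ring
    rw [this, hsq, mul_add, mul_one, ← pow_two, hsq]
    rw [add_comm u 1, add_assoc, CharTwo.add_self_eq_zero, add_zero]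
  -- 3 ∣ 2^m - 1
  obtain ⟨k, hk⟩ := hmeven
  have h3dvd : 3 ∣ 2 ^ m - 1 := by
    have h4 : 2 ^ m = 4 ^ k := by rw [hk, pow_add, ← mul_pow]; norm_num
    rw [h4]
    have := Nat.sub_dvd_pow_sub_pow 4 1 k
    simpa using this
  obtain ⟨j, hj⟩ := h3dvd
  have hq1 : 1 ≤ 2 ^ m := Nat.one_le_two_pow
  have hpow1 : u ^ (2 ^ m - 1) = 1 := by
    rw [hj, pow_mul, hcube, one_pow]
  have hsplit : 2 ^ m + 1 = (2 ^ m - 1) + 2 := by omega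
  have : u ^ 2 = 1 := by
    rw [hsplit, pow_add, hpow1, one_mul] at hu
    exact hu
  rw [hsq] at this
  -- this : u + 1 = 1
  exact hu0 (add_left_injective 1 (this.trans (zero_add 1).symm))

omit [CharP F 2] in
lemma trN_zero (m : ℕ) : trN m (0 : F) = 0 := by
  unfold trN
  exact Finset.sum_eq_zero fun i _ => zero_pow (by positivity)

-- value of f on s * u
lemma f_val (m : ℕ) (hm : 0 < m) (l μ : F) (hl : l + l ^ (2 ^ m) = 1)
    (hμK : μ ^ (2 ^ m) = μ)
    (s u : F) (hsK : s ^ (2 ^ m) = s) (hs0 : s ≠ 0) (hu : u ^ (2 ^ m + 1) = 1) :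
    fFun m l μ (s * u) =
      trM m s + trM m (s * (u + u⁻¹)) * trM m (μ * (u + u⁻¹) ^ 2) := by
  have hu0 : u ≠ 0 := by
    intro h0
    rw [h0, zero_pow (by positivity)] at hu
    exact zero_ne_one hu
  have huq : u ^ (2 ^ m) = u⁻¹ := by
    have h1 : u ^ (2 ^ m) * u = 1 := by rw [← pow_succ]; exact hu
    field_simp
    linear_combination h1
  set q := 2 ^ m with hq
  set t := u + u⁻¹ with hts
  -- first term
  have h1 : (s * u) ^ (q + 1) = s ^ 2 := by
    rw [mul_pow, hu, mul_one, pow_succ, hsK, pow_two]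
  have hsq2 : (s ^ 2) ^ q = s ^ 2 := by
    rw [← pow_mul, mul_comm, pow_mul, hsK]
  have hterm1 : trN m (l * (s * u) ^ (q + 1)) = trM m s := by
    rw [h1, trN_eq, mul_pow, hsq2]
    have : l * s ^ 2 + l ^ q * s ^ 2 = (l + l ^ q) * s ^ 2 := by ring
    rw [this, hl, one_mul, trM_sq m s hsK]
  -- second term
  have hterm2 : trN m (s * u) = trM m (s * t) := by
    rw [trN_eq, mul_pow, hsK, huq, hts, mul_add]
  -- third term
  have hq1 : 1 ≤ q := Nat.one_le_two_pow
  have h3 : (s * u) ^ (q - 1) = (u⁻¹) ^ 2 := by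
    have hsu0 : s * u ≠ 0 := mul_ne_zero hs0 hu0
    have hkey : (s * u) ^ (q - 1) * (s * u) = s * u⁻¹ := by
      rw [← pow_succ, Nat.sub_add_cancel hq1, mul_pow, hsK, huq]
    apply mul_right_cancel₀ hsu0
    rw [hkey, pow_two]
    field_simp
  have htsq : (u⁻¹) ^ 2 + (u ^ 2 : F) = t ^ 2 := by
    rw [hts]
    have := pow2pow_add u u⁻¹ 1
    rw [pow_one] at this
    rw [this]
    ring
  have hinv : ((u⁻¹ : F) ^ 2) ^ q = u ^ 2 := by
    rw [← pow_mul, mul_comm, pow_mul, inv_pow, huq, inv_inv]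
  have hterm3 : trN m (μ * (s * u) ^ (q - 1)) = trM m (μ * t ^ 2) := by
    rw [h3, trN_eq, mul_pow, hμK, hinv, ← mul_add, htsq]
  unfold fFun
  rw [hterm1, hterm2, hterm3]

end
section
variable {F : Type*} [Field F] [Fintype F] [DecidableEq F] [CharP F 2]

lemma innerSumU (m : ℕ) (hm : 0 < m) (hcard : Fintype.card F = 2 ^ (2 * m))
    (hmeven : Even m) (l μ : F) (hl : l + l ^ (2 ^ m) = 1) (hμK : μ ^ (2 ^ m) = μ)
    (u : F) (hu : u ^ (2 ^ m + 1) = 1) :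
    ∑ s ∈ Finset.univ.filter (fun x : F => x ^ (2 ^ m) = x ∧ x ≠ 0),
      eps (fFun m l μ (s * u)) = -1 := by
  classical
  set q := 2 ^ m with hq
  have hu0 : u ≠ 0 := by
    intro h0
    rw [h0, zero_pow (by positivity)] at hu
    exact zero_ne_one hu
  have huq : u ^ q = u⁻¹ := by
    have h1 : u ^ q * u = 1 := by rw [← pow_succ]; exact hu
    field_simp
    linear_combination h1
  set t := u + u⁻¹ with hts
  have htK : t ^ q = t := by
    rw [hts, hq, pow2pow_add, ← hq, huq, inv_pow, huq, inv_inv, add_comm]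
  have htK2 : (μ * t ^ 2) ^ q = μ * t ^ 2 := by
    rw [mul_pow, hμK, ← pow_mul, mul_comm 2 q, pow_mul, htK]
  have hrw : ∀ s ∈ Finset.univ.filter (fun x : F => x ^ (2 ^ m) = x ∧ x ≠ 0),
      eps (fFun m l μ (s * u)) =
        eps (trM m s + trM m (s * t) * trM m (μ * t ^ 2)) := by
    intro s hs
    simp only [Finset.mem_filter, Finset.mem_univ, true_and] at hs
    rw [f_val m hm l μ hl hμK s u hs.1 hs.2 hu]
  rw [Finset.sum_congr rfl hrw]
  rcases trM_K_cases m (μ * t ^ 2) htK2 with hb | hb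
  · have : ∀ s ∈ Finset.univ.filter (fun x : F => x ^ (2 ^ m) = x ∧ x ≠ 0),
        eps (trM m s + trM m (s * t) * trM m (μ * t ^ 2)) = eps (trM m ((1 : F) * s)) := by
      intro s _
      rw [hb, mul_zero, add_zero, one_mul]
    rw [Finset.sum_congr rfl this]
    exact char_sum_Kstar m hm hcard 1 one_ne_zero (one_pow _)
  · have ht1 : t ≠ 1 := by
      rcases eq_or_ne u 1 with rfl | hu1
      · rw [hts, inv_one, CharTwo.add_self_eq_zero]
        exact fun h => zero_ne_one h
      · exact u_ne_cube m hm hmeven u hu hu1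
    have hc0 : (1 : F) + t ≠ 0 := by
      intro h
      exact ht1 ((c2_add_eq_zero_iff 1 t).mp h).symm
    have hcK : ((1 : F) + t) ^ q = 1 + t := by
      rw [hq, pow2pow_add, one_pow, ← hq, htK]
    have : ∀ s ∈ Finset.univ.filter (fun x : F => x ^ (2 ^ m) = x ∧ x ≠ 0),
        eps (trM m s + trM m (s * t) * trM m (μ * t ^ 2)) =
          eps (trM m (((1 : F) + t) * s)) := by
      intro s _
      rw [hb, mul_one, ← trM_add]
      congr 2
      ring
    rw [Finset.sum_congr rfl this]
    exact char_sum_Kstar m hm hcard (1 + t) hc0 hcK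

lemma card_Kstar (m : ℕ) (hm : 0 < m) (hcard : Fintype.card F = 2 ^ (2 * m)) :
    (Finset.univ.filter (fun x : F => x ^ (2 ^ m) = x ∧ x ≠ 0)).card = 2 ^ m - 1 := by
  classical
  have hsplit : (Finset.univ.filter fun x : F => x ^ (2 ^ m) = x) =
      insert (0 : F) (Finset.univ.filter fun x : F => x ^ (2 ^ m) = x ∧ x ≠ 0) := by
    ext x
    simp only [Finset.mem_filter, Finset.mem_univ, true_and, Finset.mem_insert]
    constructor
    · intro h
      rcases eq_or_ne x 0 with h0 | h0
      · exact Or.inl h0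
      · exact Or.inr ⟨h, h0⟩
    · rintro (rfl | h)
      · exact zero_pow (by positivity)
      · exact h.1
  have h0 : (0 : F) ∉ (Finset.univ.filter fun x : F => x ^ (2 ^ m) = x ∧ x ≠ 0) := by simp
  have := card_K m hm hcard
  rw [hsplit, Finset.card_insert_of_notMem h0] at this
  omega

end
theorem stmt10 (m : ℕ) (hm : 0 < m) (F : Type*) [Field F] [Fintype F] [DecidableEq F]
    (hcard : Fintype.card F = 2 ^ (2 * m))
    (l : F) (hl : l + l ^ (2 ^ m) = 1)
    (μ : F) (hμK : μ ^ (2 ^ m) = μ) (hμ0 : μ ≠ 0)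
    (hmeven : Even m) :
    walsh m (fFun m l μ) 0 = -(2 ^ m : ℤ) := by
  classical
  haveI : CharP F 2 := charTwo m hm F hcard
  set q := 2 ^ m with hq
  have hq1 : 1 < q := Nat.one_lt_two_pow (by omega)
  set Kstar := Finset.univ.filter (fun x : F => x ^ (2 ^ m) = x ∧ x ≠ 0) with hKstar
  set U := Finset.univ.filter (fun x : F => x ^ (2 ^ m + 1) = 1) with hU
  -- step 1 : walsh = ∑ eps (f x)
  have hstep1 : walsh m (fFun m l μ) 0 = ∑ x : F, eps (fFun m l μ x) := by
    unfold walsh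
    apply Finset.sum_congr rfl
    intro x _
    rw [zero_mul, trN_zero, add_zero]
  -- f 0 = 0
  have hf0 : fFun m l μ 0 = 0 := by
    unfold fFun
    rw [zero_pow (by positivity), zero_pow (by omega), mul_zero, mul_zero, trN_zero]
    ring
  -- separate x = 0
  have hstep2 : ∑ x : F, eps (fFun m l μ x) =
      (∑ x ∈ Finset.univ.erase (0 : F), eps (fFun m l μ x)) + 1 := by
    rw [← Finset.sum_erase_add Finset.univ _ (Finset.mem_univ (0 : F)), hf0]
    rw [show eps (0 : F) = 1 from if_pos rfl]
  -- the bijection (s, u) ↦ s * u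
  have hinj : ∀ p ∈ Kstar ×ˢ U, ∀ p' ∈ Kstar ×ˢ U,
      p.1 * p.2 = p'.1 * p'.2 → p = p' := by
    rintro ⟨s, u⟩ hp ⟨s', u'⟩ hp' heq
    simp only [Finset.mem_product, hKstar, hU, Finset.mem_filter, Finset.mem_univ,
      true_and] at hp hp'
    obtain ⟨⟨hsK, hs0⟩, hu⟩ := hp
    obtain ⟨⟨hsK', hs0'⟩, hu'⟩ := hp'
    have hsq : ∀ (a b : F), a ^ (2 ^ m) = a → b ^ (2 ^ m + 1) = 1 → (a * b) ^ (2 ^ m + 1) = a ^ 2 := by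
      intro a b ha hb
      rw [mul_pow, hb, mul_one, pow_succ, ha, pow_two]
    have h2 : s ^ 2 = s' ^ 2 := by
      rw [← hsq s u hsK hu, ← hsq s' u' hsK' hu', heq]
    have hss : s = s' := by
      have hz : (s + s') ^ 2 = 0 := by
        have := pow2pow_add s s' 1
        rw [pow_one] at this
        rw [this, h2, CharTwo.add_self_eq_zero]
      have := pow_eq_zero_iff (n := 2) (by norm_num) |>.mp hz
      exact (c2_add_eq_zero_iff s s').mp this
    subst hss
    have huu : u = u' := mul_left_cancel₀ hs0 heq
    rw [huu]
  have hmaps : ∀ p ∈ Kstar ×ˢ U, p.1 * p.2 ∈ Finset.univ.erase (0 : F) := by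
    rintro ⟨s, u⟩ hp
    simp only [Finset.mem_product, hKstar, hU, Finset.mem_filter, Finset.mem_univ,
      true_and] at hp
    obtain ⟨⟨hsK, hs0⟩, hu⟩ := hp
    have hu0 : u ≠ 0 := by
      intro h0
      rw [h0, zero_pow (by positivity)] at hu
      exact zero_ne_one hu
    simp only [Finset.mem_erase, Finset.mem_univ, and_true]
    exact mul_ne_zero hs0 hu0
  -- cardinalities
  have hcardNstar : (Finset.univ.erase (0 : F)).card = q * q - 1 := by
    rw [Finset.card_erase_of_mem (Finset.mem_univ _), Finset.card_univ, hcard]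
    congr 1
    rw [hq, ← pow_add, two_mul]
  have hcardprod : (Kstar ×ˢ U).card = (q - 1) * (q + 1) := by
    rw [Finset.card_product, hKstar, hU, card_Kstar m hm hcard, card_U m hm hcard]
  have hqq : q * q - 1 = (q - 1) * (q + 1) := by
    have h1 : 1 ≤ q := by omega
    have h2 : 1 ≤ q * q := Nat.one_le_iff_ne_zero.mpr (by positivity)
    zify [h1, h2]
    ring
  have hcards : (Finset.univ.erase (0 : F)).card ≤ (Kstar ×ˢ U).card := by
    rw [hcardNstar, hcardprod, hqq]
  have hsurj := Finset.surj_on_of_inj_on_of_card_le (s := Kstar ×ˢ U)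
    (t := Finset.univ.erase (0 : F)) (f := fun p _ => p.1 * p.2)
    (fun p hp => hmaps p hp) (fun p p' hp hp' h => hinj p hp p' hp' h) hcards
  have hstep3 : ∑ x ∈ Finset.univ.erase (0 : F), eps (fFun m l μ x) =
      ∑ p ∈ Kstar ×ˢ U, eps (fFun m l μ (p.1 * p.2)) := by
    exact (Finset.sum_bij (i := fun p (hp : p ∈ Kstar ×ˢ U) => p.1 * p.2) (hi := hmaps)
      (i_inj := fun p hp p' hp' h => hinj p hp p' hp' h)
      (i_surj := fun b hb => by obtain ⟨a, ha, h⟩ := hsurj b hb; exact ⟨a, ha, h.symm⟩)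
      (h := fun p hp => rfl)).symm
  -- inner sums
  have hstep4 : ∑ p ∈ Kstar ×ˢ U, eps (fFun m l μ (p.1 * p.2)) = -(q + 1 : ℤ) := by
    rw [Finset.sum_product_right]
    have hinner : ∀ u ∈ U, ∑ s ∈ Kstar, eps (fFun m l μ (s * u)) = -1 := by
      intro u hu
      simp only [hU, Finset.mem_filter, Finset.mem_univ, true_and] at hu
      exact innerSumU m hm hcard hmeven l μ hl hμK u hu
    rw [Finset.sum_congr rfl hinner, Finset.sum_const, card_U m hm hcard]
    simp [hq]
  rw [hstep1, hstep2, hstep3, hstep4]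
  have hcast : ((q : ℤ)) = (2 : ℤ) ^ m := by rw [hq]; push_cast; ring
  rw [hcast]
  ring
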